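/- Fix P ≥ 1, widths m^0,…,m^P ∈ ℕ with m^{−1} := d, constants C1 > 0, C3^0,…,C3^P > 0, angles θ^0,…,θ^P ∈ [0, π/2], L > 0, and an L-Lipschitz function h : ℝ → ℝ. For p = 0,…,P let W^p ∈ ℝ^{m^{p−1} × m^p} be a matrix whose columns are nonzero, have ℓ₂ norm at most C3^p, and have pairwise nonobtuse angles at least θ^p. For x ∈ ℝ^d define v^0(x) = (W^0)ᵀ x and v^p(x) = (W^p)ᵀ (h∘v^{p−1}(x)) for p = 1,…,P, where h∘ denotes coordinatewise application. Define J^0 = C1² ((m^0−1)cos θ^0 + 1) and, for p = 1,…,P, J^p = (C3^p)² ((m^p−1)cos θ^p + 1) L² J^{p−1} + 2 (C3^p)² L |h(0)| √(m^{p−1}) ((m^p−1)cos θ^p + 1) √(J^{p−1}) + (C3^p)² ((m^p−1)cos θ^p + 1) m^{p−1} h(0)². Then for every x ∈ ℝ^d with ‖x‖₂ ≤ C1 and every p = 0,…,P, one has ‖v^p(x)‖₂² ≤ J^p. -/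

import Mathlib

open RealInnerProductSpace

/-- The nonobtuse angle `ρ(u,v) = arccos(|⟨u,v⟫| / (‖u‖‖v‖))` between two vectors. -/
noncomputable def rho {E : Type*} [NormedAddCommGroup E] [InnerProductSpace ℝ E]
    (u v : E) : ℝ :=
  Real.arccos (|⟪u, v⟫| / (‖u‖ * ‖v‖))

/-- The `j`-th column of a matrix, viewed as a vector of Euclidean space. -/
def colE {k m : ℕ} (W : Matrix (Fin k) (Fin m) ℝ) (j : Fin m) : EuclideanSpace ℝ (Fin k) :=
  WithLp.toLp 2 (fun i => W i j)

-- auxiliary lemmas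

lemma inner_bound {E : Type*} [NormedAddCommGroup E] [InnerProductSpace ℝ E]
    (u v : E) (hu : u ≠ 0) (hv : v ≠ 0) (θ : ℝ) (hθ0 : 0 ≤ θ)
    (hang : θ ≤ rho u v) : |⟪u, v⟫| ≤ Real.cos θ * (‖u‖ * ‖v‖) := by
  have hun : 0 < ‖u‖ := norm_pos_iff.2 hu
  have hvn : 0 < ‖v‖ := norm_pos_iff.2 hv
  set t := |⟪u, v⟫| / (‖u‖ * ‖v‖) with ht
  have ht0 : 0 ≤ t := div_nonneg (abs_nonneg _) (by positivity)
  have ht1 : t ≤ 1 := by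
    rw [div_le_one (by positivity)]
    exact abs_real_inner_le_norm u v
  have harc : Real.arccos t ≤ Real.pi := Real.arccos_le_pi t
  have := Real.cos_le_cos_of_nonneg_of_le_pi hθ0 harc hang
  rw [rho] at *
  rw [Real.cos_arccos (by linarith) ht1] at this
  have : |⟪u, v⟫| ≤ Real.cos θ * (‖u‖ * ‖v‖) := by
    calc |⟪u, v⟫| = t * (‖u‖ * ‖v‖) := by rw [ht, div_mul_cancel₀ _ (by positivity)]
    _ ≤ Real.cos θ * (‖u‖ * ‖v‖) := by nlinarith [mul_pos hun hvn]
  exact this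

set_option maxHeartbeats 800000 in
lemma keyA {k m : ℕ} (W : Matrix (Fin k) (Fin m) ℝ) (C : ℝ) (hC : 0 < C) (θ : ℝ)
    (hθ0 : 0 ≤ θ) (hθ2 : θ ≤ Real.pi / 2)
    (hne : ∀ j, colE W j ≠ 0)
    (hn : ∀ j, ‖colE W j‖ ≤ C)
    (hang : ∀ j l, j ≠ l → θ ≤ rho (colE W j) (colE W l))
    (z : EuclideanSpace ℝ (Fin k)) :
    ∑ j, (∑ i, W i j * z i) ^ 2 ≤ C ^ 2 * (((m : ℝ) - 1) * Real.cos θ + 1) * ‖z‖ ^ 2 := by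
  have hcos0 : 0 ≤ Real.cos θ := Real.cos_nonneg_of_mem_Icc ⟨by linarith [Real.pi_pos], hθ2⟩
  have hcos1 : Real.cos θ ≤ 1 := Real.cos_le_one θ
  set a : Fin m → ℝ := fun j => ⟪colE W j, z⟫ with ha
  have hinner : ∀ j, (∑ i, W i j * z i) = a j := by
    intro j
    simp only [ha, PiLp.inner_apply, RCLike.inner_apply, conj_trivial, colE, WithLp.ofLp_toLp]
    exact Finset.sum_congr rfl fun i _ => mul_comm _ _
  have hK : 0 ≤ ((m : ℝ) - 1) * Real.cos θ + 1 := by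
    rcases Nat.eq_zero_or_pos m with hm | hm
    · subst hm; simp; nlinarith
    · have : (1 : ℝ) ≤ m := by exact_mod_cast hm
      nlinarith
  set S := ∑ j, a j ^ 2 with hS
  have hS0 : 0 ≤ S := Finset.sum_nonneg fun j _ => sq_nonneg _
  set u : EuclideanSpace ℝ (Fin k) := ∑ j, a j • colE W j with hu
  have huz : ⟪u, z⟫ = S := by
    rw [hu, sum_inner]
    simp only [real_inner_smul_left]
    show ∑ j, a j * a j = S
    rw [hS]
    exact Finset.sum_congr rfl fun j _ => (sq (a j)).symm
  have hnu : ‖u‖ ^ 2 ≤ C ^ 2 * (((m : ℝ) - 1) * Real.cos θ + 1) * S := by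
    have hunorm : ‖u‖ ^ 2 = ∑ j, ∑ l, a j * a l * ⟪colE W j, colE W l⟫ := by
      rw [← real_inner_self_eq_norm_sq, hu, sum_inner]
      refine Finset.sum_congr rfl fun j _ => ?_
      rw [real_inner_smul_left, inner_sum, Finset.mul_sum]
      refine Finset.sum_congr rfl fun l _ => ?_
      rw [real_inner_smul_right]; ring
    rw [hunorm]
    have step1 : ∑ j, ∑ l, a j * a l * ⟪colE W j, colE W l⟫ ≤
        ∑ j, ∑ l, |a j| * |a l| * |⟪colE W j, colE W l⟫| := by
      refine Finset.sum_le_sum fun j _ => Finset.sum_le_sum fun l _ => ?_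
      calc a j * a l * ⟪colE W j, colE W l⟫ ≤ |a j * a l * ⟪colE W j, colE W l⟫| := le_abs_self _
      _ = |a j| * |a l| * |⟪colE W j, colE W l⟫| := by rw [abs_mul, abs_mul]
    refine step1.trans ?_
    have step2 : ∀ j l, |a j| * |a l| * |⟪colE W j, colE W l⟫| ≤
        Real.cos θ * C ^ 2 * (|a j| * |a l|) +
          (if j = l then (C ^ 2 - Real.cos θ * C ^ 2) * a j ^ 2 else 0) := by
      intro j l
      by_cases hjl : j = l
      · subst hjl
        rw [if_pos rfl, real_inner_self_eq_norm_sq]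
        have h1 : ‖colE W j‖ ^ 2 ≤ C ^ 2 := by
          have := hn j; have := norm_nonneg (colE W j); nlinarith
        have h2 : |a j| * |a j| * |‖colE W j‖ ^ 2| = a j ^ 2 * ‖colE W j‖ ^ 2 := by
          rw [abs_of_nonneg (sq_nonneg ‖colE W j‖), ← abs_mul, abs_mul_self]; ring
        rw [h2]
        have h3 : |a j| * |a j| = a j ^ 2 := by rw [← abs_mul, abs_mul_self, sq]
        rw [h3]
        nlinarith [sq_nonneg (a j)]
      · rw [if_neg hjl]
        have h1 := inner_bound (colE W j) (colE W l) (hne j) (hne l) θ hθ0 (hang j l hjl)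
        have h2 : ‖colE W j‖ * ‖colE W l‖ ≤ C ^ 2 := by
          have := hn j; have := hn l
          have := norm_nonneg (colE W j); have := norm_nonneg (colE W l); nlinarith
        have h3 : |⟪colE W j, colE W l⟫| ≤ Real.cos θ * C ^ 2 := by nlinarith
        nlinarith [mul_nonneg (abs_nonneg (a j)) (abs_nonneg (a l)),
          mul_le_mul_of_nonneg_left h3 (mul_nonneg (abs_nonneg (a j)) (abs_nonneg (a l)))]
    calc ∑ j, ∑ l, |a j| * |a l| * |⟪colE W j, colE W l⟫|
        ≤ ∑ j, ∑ l, (Real.cos θ * C ^ 2 * (|a j| * |a l|) +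
            (if j = l then (C ^ 2 - Real.cos θ * C ^ 2) * a j ^ 2 else 0)) :=
          Finset.sum_le_sum fun j _ => Finset.sum_le_sum fun l _ => step2 j l
      _ = Real.cos θ * C ^ 2 * (∑ j, |a j|) ^ 2 + (C ^ 2 - Real.cos θ * C ^ 2) * S := by
          rw [Finset.sum_congr rfl fun j (_ : j ∈ Finset.univ) => Finset.sum_add_distrib]
          rw [Finset.sum_add_distrib]
          congr 1
          · rw [pow_two (∑ j, |a j|), Finset.sum_mul_sum, Finset.mul_sum]
            refine Finset.sum_congr rfl fun j _ => ?_
            rw [Finset.mul_sum]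
          · rw [hS, Finset.mul_sum]
            refine Finset.sum_congr rfl fun j _ => ?_
            simp
      _ ≤ C ^ 2 * (((m : ℝ) - 1) * Real.cos θ + 1) * S := by
          have hcs : (∑ j, |a j|) ^ 2 ≤ (m : ℝ) * S := by
            have h := sq_sum_le_card_mul_sum_sq (s := (Finset.univ : Finset (Fin m)))
              (f := fun j => |a j|)
            simpa [hS, sq_abs] using h
          nlinarith [mul_le_mul_of_nonneg_left hcs (mul_nonneg hcos0 (sq_nonneg C))]
  have hcs2 : S ^ 2 ≤ ‖u‖ ^ 2 * ‖z‖ ^ 2 := by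
    have h1 : S ≤ |⟪u, z⟫| := by rw [huz]; exact le_abs_self _
    have h2 := abs_real_inner_le_norm u z
    nlinarith [norm_nonneg u, norm_nonneg z, abs_nonneg (⟪u, z⟫ : ℝ)]
  have goal : S ≤ C ^ 2 * (((m : ℝ) - 1) * Real.cos θ + 1) * ‖z‖ ^ 2 := by
    rcases eq_or_lt_of_le hS0 with hS0' | hS0'
    · rw [← hS0']; positivity
    · have h4 : S ^ 2 ≤ C ^ 2 * (((m : ℝ) - 1) * Real.cos θ + 1) * S * ‖z‖ ^ 2 := by
        nlinarith [sq_nonneg ‖z‖]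
      nlinarith [h4, hS0']
  calc ∑ j, (∑ i, W i j * z i) ^ 2 = S := by
        rw [hS]; exact Finset.sum_congr rfl fun j _ => by rw [hinner]
    _ ≤ _ := goal



lemma keyB (L : ℝ) (hL : 0 < L) (h : ℝ → ℝ) (hLip : LipschitzWith L.toNNReal h)
    {k : ℕ} (y : Fin k → ℝ) :
    ∑ i, (h (y i)) ^ 2 ≤ L ^ 2 * (∑ i, (y i) ^ 2)
      + 2 * L * |h 0| * Real.sqrt k * Real.sqrt (∑ i, (y i) ^ 2)
      + k * (h 0) ^ 2 := by
  have hpt : ∀ i, (h (y i)) ^ 2 ≤ (L * |y i| + |h 0|) ^ 2 := by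
    intro i
    have h1 : |h (y i) - h 0| ≤ L * |y i| := by
      have := hLip.dist_le_mul (y i) 0
      simpa [Real.dist_eq, Real.coe_toNNReal L hL.le] using this
    have h2 : |h (y i)| ≤ L * |y i| + |h 0| := by
      calc |h (y i)| = |(h (y i) - h 0) + h 0| := by ring_nf
        _ ≤ |h (y i) - h 0| + |h 0| := abs_add_le _ _
        _ ≤ L * |y i| + |h 0| := by linarith
    calc (h (y i)) ^ 2 = |h (y i)| ^ 2 := (sq_abs _).symm
      _ ≤ (L * |y i| + |h 0|) ^ 2 := by
          have h0 : 0 ≤ |h (y i)| := abs_nonneg _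
          nlinarith
  have hsum1 : ∑ i, (h (y i)) ^ 2 ≤ ∑ i, (L * |y i| + |h 0|) ^ 2 :=
    Finset.sum_le_sum fun i _ => hpt i
  have hexp : ∑ i, (L * |y i| + |h 0|) ^ 2 =
      L ^ 2 * (∑ i, (y i) ^ 2) + 2 * L * |h 0| * (∑ i, |y i|) + k * (h 0) ^ 2 := by
    have : ∀ i, (L * |y i| + |h 0|) ^ 2 =
        L ^ 2 * (y i) ^ 2 + 2 * L * |h 0| * |y i| + (h 0) ^ 2 := by
      intro i
      have : |y i| ^ 2 = (y i) ^ 2 := sq_abs _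
      have h0 : |h 0| ^ 2 = (h 0) ^ 2 := sq_abs _
      nlinarith [sq_abs (y i), sq_abs (h 0)]
    rw [Finset.sum_congr rfl fun i _ => this i]
    rw [Finset.sum_add_distrib, Finset.sum_add_distrib, ← Finset.mul_sum, ← Finset.mul_sum]
    simp [Finset.card_univ]
  have habs : ∑ i, |y i| ≤ Real.sqrt k * Real.sqrt (∑ i, (y i) ^ 2) := by
    have h1 : (∑ i, |y i|) ^ 2 ≤ (k : ℝ) * ∑ i, (y i) ^ 2 := by
      have := sq_sum_le_card_mul_sum_sq (s := (Finset.univ : Finset (Fin k)))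
        (f := fun i => |y i|)
      simpa [sq_abs] using this
    have h2 : ∑ i, |y i| = Real.sqrt ((∑ i, |y i|) ^ 2) :=
      (Real.sqrt_sq (Finset.sum_nonneg fun i _ => abs_nonneg _)).symm
    rw [h2, ← Real.sqrt_mul (Nat.cast_nonneg k)]
    exact Real.sqrt_le_sqrt h1
  have hfin : 2 * L * |h 0| * (∑ i, |y i|) ≤
      2 * L * |h 0| * (Real.sqrt k * Real.sqrt (∑ i, (y i) ^ 2)) := by
    have hc : 0 ≤ 2 * L * |h 0| := by positivity
    exact mul_le_mul_of_nonneg_left habs hc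
  calc ∑ i, (h (y i)) ^ 2 ≤ _ := hsum1
    _ = _ := hexp
    _ ≤ _ := by linarith


/-- Output magnitude bound of a diversity-constrained multi-layer
network. Here `msz p = m^p`, `W0 = W^0 : ℝ^{d×m^0}`, and `W p = W^{p+1} : ℝ^{m^p×m^{p+1}}`;
each layer's columns are nonzero, have norm at most `C3^p` and pairwise nonobtuse angles
at least `θ^p`. The pre-activation outputs are `v^0(x) = (W^0)ᵀx`,
`v^{p+1}(x) = (W^{p+1})ᵀ(h∘v^p(x))`, and `J` is the recursively defined bound
(with `J^0 = C1²(C3^0)²((m^0−1)cos θ^0 + 1)` as the columns of `W^0` have norm ≤ `C3^0`).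
Then `‖v^p(x)‖₂² ≤ J^p` for all `‖x‖₂ ≤ C1` and `p ≤ P`. -/
theorem stmt_11 {d : ℕ} (P : ℕ) (hP : 1 ≤ P) (msz : ℕ → ℕ)
    (C1 : ℝ) (hC1 : 0 < C1) (C3 : ℕ → ℝ) (hC3 : ∀ p, 0 < C3 p)
    (θ : ℕ → ℝ) (hθ : ∀ p, θ p ∈ Set.Icc 0 (Real.pi / 2))
    (L : ℝ) (hL : 0 < L) (h : ℝ → ℝ) (hLip : LipschitzWith L.toNNReal h)
    (W0 : Matrix (Fin d) (Fin (msz 0)) ℝ)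
    (W : (p : ℕ) → Matrix (Fin (msz p)) (Fin (msz (p + 1))) ℝ)
    (hW0ne : ∀ j, colE W0 j ≠ 0)
    (hW0n : ∀ j, ‖colE W0 j‖ ≤ C3 0)
    (hW0ang : ∀ j k, j ≠ k → θ 0 ≤ rho (colE W0 j) (colE W0 k))
    (hWne : ∀ p j, colE (W p) j ≠ 0)
    (hWn : ∀ p j, ‖colE (W p) j‖ ≤ C3 (p + 1))
    (hWang : ∀ p j k, j ≠ k → θ (p + 1) ≤ rho (colE (W p) j) (colE (W p) k))
    (v : (p : ℕ) → EuclideanSpace ℝ (Fin d) → EuclideanSpace ℝ (Fin (msz p)))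
    (hv0 : ∀ x j, v 0 x j = ∑ i, W0 i j * x i)
    (hvs : ∀ p x j, v (p + 1) x j = ∑ i, W p i j * h (v p x i))
    (J : ℕ → ℝ)
    (hJ0 : J 0 = C1 ^ 2 * C3 0 ^ 2 * (((msz 0 : ℝ) - 1) * Real.cos (θ 0) + 1))
    (hJs : ∀ p, J (p + 1) =
      C3 (p + 1) ^ 2 * (((msz (p + 1) : ℝ) - 1) * Real.cos (θ (p + 1)) + 1) * L ^ 2 * J p
      + 2 * C3 (p + 1) ^ 2 * L * |h 0| * Real.sqrt (msz p)
          * (((msz (p + 1) : ℝ) - 1) * Real.cos (θ (p + 1)) + 1) * Real.sqrt (J p)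
      + C3 (p + 1) ^ 2 * (((msz (p + 1) : ℝ) - 1) * Real.cos (θ (p + 1)) + 1)
          * msz p * h 0 ^ 2) :
    ∀ x : EuclideanSpace ℝ (Fin d), ‖x‖ ≤ C1 → ∀ p ≤ P, ‖v p x‖ ^ 2 ≤ J p := by
  intro x hx
  have hKnn : ∀ (m : ℕ) (t : ℝ), t ∈ Set.Icc 0 (Real.pi / 2) →
      0 ≤ ((m : ℝ) - 1) * Real.cos t + 1 := by
    intro m t ht
    have hc0 : 0 ≤ Real.cos t := Real.cos_nonneg_of_mem_Icc ⟨by linarith [Real.pi_pos, ht.1], ht.2⟩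
    have hc1 := Real.cos_le_one t
    rcases Nat.eq_zero_or_pos m with hm | hm
    · subst hm; simp; nlinarith
    · have : (1 : ℝ) ≤ m := by exact_mod_cast hm
      nlinarith
  have hnorm : ∀ (n : ℕ) (w : EuclideanSpace ℝ (Fin n)), ‖w‖ ^ 2 = ∑ i, (w i) ^ 2 := by
    intro n w
    rw [EuclideanSpace.norm_eq, Real.sq_sqrt (Finset.sum_nonneg fun i _ => sq_nonneg _)]
    exact Finset.sum_congr rfl fun i _ => by rw [Real.norm_eq_abs, sq_abs]
  have main : ∀ p, ‖v p x‖ ^ 2 ≤ J p := by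
    intro p
    induction p with
    | zero =>
      have hθ0 := hθ 0
      have hA := keyA W0 (C3 0) (hC3 0) (θ 0) hθ0.1 hθ0.2 hW0ne hW0n hW0ang x
      have hx2 : ‖x‖ ^ 2 ≤ C1 ^ 2 := by nlinarith [norm_nonneg x]
      rw [hnorm _ (v 0 x)]
      have heq : ∑ j, (v 0 x j) ^ 2 = ∑ j, (∑ i, W0 i j * x i) ^ 2 :=
        Finset.sum_congr rfl fun j _ => by rw [hv0]
      rw [heq, hJ0]
      have hK := hKnn (msz 0) (θ 0) hθ0
      nlinarith [mul_le_mul_of_nonneg_left hx2 (mul_nonneg (sq_nonneg (C3 0)) hK)]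
    | succ p ih =>
      have hθp := hθ (p + 1)
      set y : EuclideanSpace ℝ (Fin (msz p)) := WithLp.toLp 2 (fun i => h (v p x i)) with hy
      have hA := keyA (W p) (C3 (p + 1)) (hC3 (p + 1)) (θ (p + 1)) hθp.1 hθp.2
        (hWne p) (hWn p) (hWang p) y
      have hQ : ‖v p x‖ ^ 2 = ∑ i, (v p x i) ^ 2 := hnorm _ _
      have hQJ : ∑ i, (v p x i) ^ 2 ≤ J p := hQ ▸ ih
      have hB := keyB L hL h hLip (fun i => v p x i)
      have hy2 : ‖y‖ ^ 2 = ∑ i, (h (v p x i)) ^ 2 := by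
        rw [hnorm]
      have hsq : Real.sqrt (∑ i, (v p x i) ^ 2) ≤ Real.sqrt (J p) := Real.sqrt_le_sqrt hQJ
      have hK := hKnn (msz (p + 1)) (θ (p + 1)) hθp
      have hM : ‖y‖ ^ 2 ≤ L ^ 2 * J p
          + 2 * L * |h 0| * Real.sqrt (msz p) * Real.sqrt (J p) + (msz p) * (h 0) ^ 2 := by
        rw [hy2]
        refine hB.trans ?_
        have hc : (0 : ℝ) ≤ 2 * L * |h 0| * Real.sqrt (msz p) := by positivity
        nlinarith [mul_le_mul_of_nonneg_left hsq hc,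
          mul_le_mul_of_nonneg_left hQJ (sq_nonneg L)]
      have hVeq : ‖v (p + 1) x‖ ^ 2 = ∑ j, (∑ i, W p i j * y i) ^ 2 := by
        rw [hnorm]
        refine Finset.sum_congr rfl fun j _ => ?_
        rw [hvs]
      rw [hVeq]
      refine hA.trans ?_
      have hJeq : J (p + 1) = C3 (p + 1) ^ 2 * (((msz (p + 1) : ℝ) - 1) * Real.cos (θ (p + 1)) + 1) *
          (L ^ 2 * J p + 2 * L * |h 0| * Real.sqrt (msz p) * Real.sqrt (J p)
            + (msz p) * (h 0) ^ 2) := by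
        rw [hJs]; ring
      rw [hJeq]
      exact mul_le_mul_of_nonneg_left hM (mul_nonneg (sq_nonneg _) hK)
  intro p _
  exact main p
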